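/- Let T be a threshold graph with threshold ordering v_1,…,v_n, dominating-side vertices c_1,…,c_m (in order), I the set of isolated-side vertices, I_r the isolated-side vertices after c_r, and P_r the vertices before c_r. Then every dominating set S containing at least one c_r equals U ∪ {c_r} ∪ I_r for the unique largest index r with c_r ∈ S and some U ⊆ P_r; conversely, every set of this form is dominating. Moreover, a dominating set containing no c_r exists iff some isolated-side vertex precedes c_1, in which case it is uniquely I. -/
import Mathlib


open Finset

/-- The closed neighborhood of a vertex as a `Finset`. -/
def closedNbhd {V : Type*} [Fintype V] [DecidableEq V] (G : SimpleGraph V)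
    [DecidableRel G.Adj] (v : V) : Finset V :=
  insert v (G.neighborFinset v)

lemma mem_closedNbhd {V : Type*} [Fintype V] [DecidableEq V] (G : SimpleGraph V)
    [DecidableRel G.Adj] (u v : V) : u ∈ closedNbhd G v ↔ u = v ∨ G.Adj v u := by
  simp [closedNbhd]

/-- Decomposition of dominating sets of a threshold graph. The graph `G` on
`Fin n` has a threshold ordering recorded by `side` (`side j = true` means `v_j`
was added as a dominating vertex, adjacent to all earlier vertices). Every
dominating set containing a dominating-side vertex is `U ∪ {r} ∪ I_r` for its
last dominating-side vertex `r` and some `U ⊆ P_r`, and conversely every such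
set is dominating. A dominating set avoiding the dominating side exists iff some
isolated-side vertex precedes the first dominating-side vertex `c₁`, in which
case it is uniquely the whole isolated side `I`. -/
theorem threshold_dominating_decomposition {n : ℕ} (G : SimpleGraph (Fin n))
    [DecidableRel G.Adj] (side : Fin n → Bool)
    (hside : ∀ i j : Fin n, i < j → (G.Adj i j ↔ side j = true)) :
    (∀ S : Finset (Fin n), (∀ v : Fin n, ∃ u ∈ S, u ∈ closedNbhd G v) →
      (∃ r ∈ S, side r = true) →
      ∃ r ∈ S, side r = true ∧ (∀ r' ∈ S, side r' = true → r' ≤ r) ∧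
        ∃ U ⊆ univ.filter (fun j : Fin n => j < r),
          S = U ∪ {r} ∪ univ.filter (fun j : Fin n => side j = false ∧ r < j))
    ∧ (∀ r : Fin n, side r = true → ∀ U ⊆ univ.filter (fun j : Fin n => j < r),
        ∀ v : Fin n, ∃ u ∈ U ∪ {r} ∪ univ.filter (fun j : Fin n => side j = false ∧ r < j),
          u ∈ closedNbhd G v)
    ∧ ∀ c₁ : Fin n, side c₁ = true → (∀ j : Fin n, side j = true → c₁ ≤ j) →
        ((∃ S : Finset (Fin n), (∀ v : Fin n, ∃ u ∈ S, u ∈ closedNbhd G v) ∧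
            ∀ r ∈ S, side r = false) ↔ ∃ j : Fin n, side j = false ∧ j < c₁)
        ∧ ∀ S : Finset (Fin n), (∀ v : Fin n, ∃ u ∈ S, u ∈ closedNbhd G v) →
            (∀ r ∈ S, side r = false) →
            S = univ.filter (fun j : Fin n => side j = false) := by
  -- basic adjacency facts
  have hadj : ∀ u v : Fin n, G.Adj u v → (u < v ∧ side v = true) ∨ (v < u ∧ side u = true) := by
    intro u v h
    rcases lt_trichotomy u v with hlt | heq | hgt
    · exact Or.inl ⟨hlt, (hside u v hlt).1 h⟩
    · exact absurd heq h.ne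
    · exact Or.inr ⟨hgt, (hside v u hgt).1 h.symm⟩
  refine ⟨?_, ?_, ?_⟩
  · -- part 1
    intro S hdom ⟨r₀, hr₀S, hr₀⟩
    set T := S.filter (fun x => side x = true) with hT
    have hTne : T.Nonempty := ⟨r₀, by simp [hT, hr₀S, hr₀]⟩
    set r := T.max' hTne with hr
    have hrT : r ∈ T := T.max'_mem hTne
    have hrS : r ∈ S := (mem_filter.mp hrT).1
    have hrside : side r = true := by simpa using (mem_filter.mp hrT).2
    have hmax : ∀ r' ∈ S, side r' = true → r' ≤ r := by
      intro r' h1 h2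
      exact T.le_max' r' (by simp [hT, h1, h2])
    -- every isolated vertex after r is in S
    have hIr : ∀ j : Fin n, side j = false → r < j → j ∈ S := by
      intro j hjf hrj
      obtain ⟨u, huS, hu⟩ := hdom j
      rcases (mem_closedNbhd G u j).mp hu with h | h
      · exact h ▸ huS
      · rcases hadj j u h with ⟨hlt, hut⟩ | ⟨hlt, hjt⟩
        · exact absurd (hmax u huS hut) (not_le.mpr (lt_trans hrj hlt))
        · simp [hjf] at hjt
    refine ⟨r, hrS, hrside, hmax, S.filter (fun j => j < r), ?_, ?_⟩
    · intro x hx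
      simp only [mem_filter] at hx ⊢
      exact ⟨mem_univ x, hx.2⟩
    · ext x
      simp only [mem_union, mem_filter, mem_singleton, mem_univ, true_and]
      constructor
      · intro hx
        rcases lt_trichotomy x r with h | h | h
        · exact Or.inl (Or.inl ⟨hx, h⟩)
        · exact Or.inl (Or.inr h)
        · refine Or.inr ⟨?_, h⟩
          cases hxs : side x
          · rfl
          · exact absurd (hmax x hx hxs) (not_le.mpr h)
      · rintro ((⟨h, _⟩ | rfl) | ⟨h1, h2⟩)
        · exact h
        · exact hrS
        · exact hIr x h1 h2
  · -- part 2
    intro r hrside U hU v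
    rcases lt_trichotomy v r with h | h | h
    · exact ⟨r, by simp, (mem_closedNbhd G r v).mpr (Or.inr ((hside v r h).mpr hrside))⟩
    · exact ⟨r, by simp, (mem_closedNbhd G r v).mpr (Or.inl h.symm)⟩
    · cases hvs : side v
      · exact ⟨v, by simp [hvs, h], (mem_closedNbhd G v v).mpr (Or.inl rfl)⟩
      · exact ⟨r, by simp, (mem_closedNbhd G r v).mpr
          (Or.inr (((hside r v h).mpr hvs).symm))⟩
  · -- part 3
    intro c₁ hc₁ hfirst
    constructor
    · constructor
      · rintro ⟨S, hdom, hall⟩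
        obtain ⟨u, huS, hu⟩ := hdom c₁
        rcases (mem_closedNbhd G u c₁).mp hu with h | h
        · have := hall u huS; rw [h] at this; simp [hc₁] at this
        · rcases hadj c₁ u h with ⟨hlt, hut⟩ | ⟨hlt, _⟩
          · have := hall u huS; simp [hut] at this
          · exact ⟨u, hall u huS, hlt⟩
      · rintro ⟨j, hjf, hjc⟩
        refine ⟨univ.filter (fun x => side x = false), ?_, fun r hr => (mem_filter.mp hr).2⟩
        intro v
        cases hvs : side v
        · exact ⟨v, by simp [hvs], (mem_closedNbhd G v v).mpr (Or.inl rfl)⟩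
        · have hjv : j < v := lt_of_lt_of_le hjc (hfirst v hvs)
          exact ⟨j, by simp [hjf], (mem_closedNbhd G j v).mpr
            (Or.inr ((hside j v hjv).mpr hvs).symm)⟩
    · intro S hdom hall
      ext x
      simp only [mem_filter, mem_univ, true_and]
      constructor
      · exact fun hx => hall x hx
      · intro hxf
        obtain ⟨u, huS, hu⟩ := hdom x
        rcases (mem_closedNbhd G u x).mp hu with h | h
        · exact h ▸ huS
        · rcases hadj x u h with ⟨hlt, hut⟩ | ⟨hlt, hxt⟩
          · have := hall u huS; simp [hut] at this
          · simp [hxf] at hxt
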